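/- Let d ≥ 1 and let A_1, …, A_N be real symmetric d×d matrices. Then (A_1, …, A_N) has the phase retrieval property on ℝ^d if and only if every nonzero real symmetric d×d matrix Q with rank(Q) ≤ 2 and Tr(A_jQ) = 0 for all 1 ≤ j ≤ N has exactly two nonzero eigenvalues and these have the same sign (equivalently, rank(Q) = 2 and Q is positive semidefinite or negative semidefinite). -/

import Mathlib

open Matrix

/-- A tuple of real symmetric `d×d` matrices has the phase retrieval property on `ℝ^d`
if equality of all quadratic measurements implies equality up to sign. -/
def PhaseRetrievableR {d N : ℕ} (A : Fin N → Matrix (Fin d) (Fin d) ℝ) : Prop :=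
  ∀ x y : Fin d → ℝ,
    (∀ j, x ⬝ᵥ (A j) *ᵥ x = y ⬝ᵥ (A j) *ᵥ y) → x = y ∨ x = -y

section PR3aux

variable {d N : ℕ}

lemma PR3_tr_mul_vmv (A : Matrix (Fin d) (Fin d) ℝ) (v : Fin d → ℝ) :
    Matrix.trace (A * vecMulVec v v) = v ⬝ᵥ A *ᵥ v := by
  simp only [Matrix.trace, Matrix.diag_apply, Matrix.mul_apply, vecMulVec_apply,
    dotProduct, mulVec, Finset.mul_sum]
  exact Finset.sum_congr rfl fun i _ => Finset.sum_congr rfl fun k _ => by ring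

lemma PR3_vmv_mulVec (w z v : Fin d → ℝ) : vecMulVec w z *ᵥ v = (z ⬝ᵥ v) • w := by
  funext a
  simp only [mulVec, vecMulVec_apply, dotProduct, Pi.smul_apply, smul_eq_mul, Finset.sum_mul]
  exact Finset.sum_congr rfl fun i _ => by ring

lemma PR3_rank_vmv_le (x y : Fin d → ℝ) : (vecMulVec x y).rank ≤ 1 := by
  rw [vecMulVec_eq Unit]
  refine (rank_mul_le_left _ _).trans ((rank_le_card_width _).trans_eq ?_)
  simp

lemma PR3_rank_add_le (M N : Matrix (Fin d) (Fin d) ℝ) : (M + N).rank ≤ M.rank + N.rank := by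
  have h : LinearMap.range (M + N).mulVecLin ≤
      LinearMap.range M.mulVecLin ⊔ LinearMap.range N.mulVecLin := by
    rw [mulVecLin_add]
    rintro _ ⟨v, rfl⟩
    exact Submodule.mem_sup.2 ⟨M *ᵥ v, ⟨v, rfl⟩, N *ᵥ v, ⟨v, rfl⟩, rfl⟩
  refine le_trans (Submodule.finrank_mono h) ?_
  exact Submodule.finrank_add_le_finrank_add_finrank _ _

lemma PR3_rank_neg_eq (M : Matrix (Fin d) (Fin d) ℝ) : (-M).rank = M.rank := by
  have h : LinearMap.range (-M).mulVecLin = LinearMap.range M.mulVecLin := by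
    apply le_antisymm
    · rintro _ ⟨w, rfl⟩; exact ⟨-w, by simp [mulVecLin_apply, neg_mulVec, mulVec_neg]⟩
    · rintro _ ⟨w, rfl⟩; exact ⟨-w, by simp [mulVecLin_apply, neg_mulVec, mulVec_neg]⟩
  unfold Matrix.rank
  rw [h]

lemma PR3_vmv_self_inj {x y : Fin d → ℝ} (h : vecMulVec x x = vecMulVec y y) :
    x = y ∨ x = -y := by
  by_cases hx : x = 0
  · subst hx
    left
    funext i
    have := congrFun (congrFun h i) i
    simp only [vecMulVec_apply, Pi.zero_apply, zero_mul] at this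
    have := mul_self_eq_zero.1 this.symm
    simp [this]
  · obtain ⟨i, hi⟩ := Function.ne_iff.1 hx
    simp only [Pi.zero_apply] at hi
    have key : ∀ a b, x a * x b = y a * y b := fun a b => congrFun (congrFun h a) b
    rcases mul_self_eq_mul_self_iff.1 (key i i) with hyi | hyi
    · left
      funext b
      have := key i b
      rw [hyi] at this
      exact mul_left_cancel₀ (fun h0 => hi (hyi.trans h0)) this
    · right
      funext b
      have := key i b
      rw [hyi] at this
      have h2 : y i * x b = y i * (-y b) := by linarith [this]
      have hyi0 : y i ≠ 0 := fun h0 => hi (by rw [hyi, h0, neg_zero])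
      simpa using mul_left_cancel₀ hyi0 h2

lemma PR3_spectral_sum (Q : Matrix (Fin d) (Fin d) ℝ) (hQ : Q.IsHermitian) :
    Q = ∑ i, hQ.eigenvalues i •
      vecMulVec ⇑(hQ.eigenvectorBasis i) ⇑(hQ.eigenvectorBasis i) := by
  ext a b
  conv_lhs => rw [hQ.spectral_theorem, Unitary.conjStarAlgAut_apply]
  simp only [Matrix.mul_apply, Matrix.sum_apply, Matrix.smul_apply, vecMulVec_apply,
    diagonal_apply, Function.comp_apply, smul_eq_mul, star_apply,
    IsHermitian.eigenvectorUnitary_apply, RCLike.star_def]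
  refine Finset.sum_congr rfl fun i _ => ?_
  simp only [mul_ite, mul_zero, Finset.sum_ite_eq', Finset.mem_univ, if_true,
    starRingEnd_apply, star_trivial, RCLike.ofReal_real_eq_id, id_eq]
  ring

lemma PR3_dot_basis (Q : Matrix (Fin d) (Fin d) ℝ) (hQ : Q.IsHermitian) (i j : Fin d) :
    ⇑(hQ.eigenvectorBasis i) ⬝ᵥ ⇑(hQ.eigenvectorBasis j) = if i = j then 1 else 0 := by
  have h := orthonormal_iff_ite.mp hQ.eigenvectorBasis.orthonormal i j
  rw [dotProduct_comm]
  simpa [dotProduct, PiLp.inner_apply, RCLike.inner_apply] using h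

lemma PR3_smul_vmv (r : ℝ) (w : Fin d → ℝ) :
    vecMulVec (r • w) (r • w) = (r * r) • vecMulVec w w := by
  ext a b
  simp only [vecMulVec_apply, Pi.smul_apply, Matrix.smul_apply, smul_eq_mul]
  ring

lemma PR3_vmv_psd (w : Fin d → ℝ) : (vecMulVec w w).PosSemidef := by
  rw [posSemidef_iff_dotProduct_mulVec]
  constructor
  · ext a b
    rw [conjTranspose_apply, star_trivial, vecMulVec_apply, vecMulVec_apply]
    ring
  · intro v
    rw [star_trivial, PR3_vmv_mulVec, dotProduct_smul, smul_eq_mul, dotProduct_comm]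
    exact mul_self_nonneg _

lemma PR3_no_indef (A : Fin N → Matrix (Fin d) (Fin d) ℝ) (PR : PhaseRetrievableR A)
    (x y : Fin d → ℝ) (hx : x ⬝ᵥ x ≠ 0) (hxy : x ⬝ᵥ y = 0)
    (h : ∀ j, Matrix.trace (A j * (vecMulVec x x - vecMulVec y y)) = 0) : False := by
  have hm : ∀ j, x ⬝ᵥ A j *ᵥ x = y ⬝ᵥ A j *ᵥ y := by
    intro j
    have hj := h j
    rw [mul_sub, trace_sub, PR3_tr_mul_vmv, PR3_tr_mul_vmv] at hj
    linarith
  rcases PR x y hm with rfl | rfl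
  · exact hx hxy
  · rw [neg_dotProduct] at hxy
    apply hx
    rw [neg_dotProduct, dotProduct_neg, neg_neg]
    linarith

lemma PR3_psd_rank (x y : Fin d → ℝ) (h : (vecMulVec x x - vecMulVec y y).PosSemidef) :
    (vecMulVec x x - vecMulVec y y).rank ≤ 1 := by
  by_cases hx : x = 0
  · subst hx
    have he : vecMulVec (0 : Fin d → ℝ) 0 - vecMulVec y y = vecMulVec (-y) y := by
      ext a b
      simp only [Matrix.sub_apply, vecMulVec_apply, Pi.zero_apply, Pi.neg_apply]
      ring
    rw [he]
    exact PR3_rank_vmv_le _ _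
  · have hxx : x ⬝ᵥ x ≠ 0 := fun h0 => hx (dotProduct_self_eq_zero.1 h0)
    have key : ∀ v, x ⬝ᵥ v = 0 → y ⬝ᵥ v = 0 := by
      intro v hxv
      have h2 := (posSemidef_iff_dotProduct_mulVec.1 h).2 v
      rw [star_trivial, sub_mulVec, PR3_vmv_mulVec, PR3_vmv_mulVec, dotProduct_sub,
        dotProduct_smul, dotProduct_smul, smul_eq_mul, smul_eq_mul,
        dotProduct_comm v x, dotProduct_comm v y, hxv] at h2
      nlinarith [h2]
    have hxv : x ⬝ᵥ (y - ((x ⬝ᵥ y) / (x ⬝ᵥ x)) • x) = 0 := by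
      rw [dotProduct_sub, dotProduct_smul, smul_eq_mul]
      field_simp
      ring
    have hyv := key _ hxv
    have hvv : (y - ((x ⬝ᵥ y) / (x ⬝ᵥ x)) • x) ⬝ᵥ (y - ((x ⬝ᵥ y) / (x ⬝ᵥ x)) • x) = 0 := by
      rw [sub_dotProduct, hyv, smul_dotProduct, smul_eq_mul, hxv, mul_zero, zero_sub, neg_zero]
    have hy : y = ((x ⬝ᵥ y) / (x ⬝ᵥ x)) • x := by
      have := dotProduct_self_eq_zero.1 hvv
      exact sub_eq_zero.1 this
    rw [hy, PR3_smul_vmv]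
    have he : vecMulVec x x - (((x ⬝ᵥ y) / (x ⬝ᵥ x)) * ((x ⬝ᵥ y) / (x ⬝ᵥ x))) • vecMulVec x x
        = vecMulVec ((1 - ((x ⬝ᵥ y) / (x ⬝ᵥ x)) * ((x ⬝ᵥ y) / (x ⬝ᵥ x))) • x) x := by
      ext a b
      simp only [Matrix.sub_apply, Matrix.smul_apply, vecMulVec_apply, Pi.smul_apply,
        smul_eq_mul]
      ring
    rw [he]
    exact PR3_rank_vmv_le _ _

end PR3aux

theorem stmt_3 (d N : ℕ) (hd : 1 ≤ d) (A : Fin N → Matrix (Fin d) (Fin d) ℝ)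
    (hA : ∀ j, (A j).IsSymm) :
    PhaseRetrievableR A ↔
      ∀ Q : Matrix (Fin d) (Fin d) ℝ, Q ≠ 0 → Q.IsSymm → Q.rank ≤ 2 →
        (∀ j, Matrix.trace (A j * Q) = 0) →
        Q.rank = 2 ∧ (Q.PosSemidef ∨ (-Q).PosSemidef) := by
  constructor
  · intro PR Q hQ0 hQsym hrk htr
    have hherm : Q.IsHermitian := by
      ext i j
      rw [conjTranspose_apply, star_trivial, hQsym.apply]
    set lam := hherm.eigenvalues with hlam
    set u : Fin d → Fin d → ℝ := fun i => ⇑(hherm.eigenvectorBasis i) with hu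
    have hdot : ∀ i j, u i ⬝ᵥ u j = if i = j then 1 else 0 := PR3_dot_basis Q hherm
    have hsum : Q = ∑ i, lam i • vecMulVec (u i) (u i) := PR3_spectral_sum Q hherm
    have hrke : Q.rank = Fintype.card {i // lam i ≠ 0} := hherm.rank_eq_card_non_zero_eigs
    have hcard_ne : Fintype.card {i // lam i ≠ 0} ≠ 0 := by
      intro h0
      apply hQ0
      have hz : ∀ i, lam i = 0 := by
        intro i
        by_contra hne
        exact (Fintype.card_eq_zero_iff.1 h0).elim' ⟨i, hne⟩
      rw [hsum]
      simp [hz]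
    have hcard_le : Fintype.card {i // lam i ≠ 0} ≤ 2 := hrke ▸ hrk
    rcases (by omega : Fintype.card {i // lam i ≠ 0} = 1 ∨
        Fintype.card {i // lam i ≠ 0} = 2) with hc1 | hc2
    · exfalso
      obtain ⟨⟨i0, hi0⟩, huniq⟩ := Fintype.card_eq_one_iff.1 hc1
      have hz : ∀ j, j ≠ i0 → lam j = 0 := by
        intro j hj
        by_contra hne
        exact hj (congrArg Subtype.val (huniq ⟨j, hne⟩))
      have hQ1 : Q = lam i0 • vecMulVec (u i0) (u i0) := by
        rw [hsum, Finset.sum_eq_single i0]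
        · intro b _ hb; rw [hz b hb, zero_smul]
        · intro hmem; exact absurd (Finset.mem_univ i0) hmem
      rcases lt_or_gt_of_ne hi0 with hneg | hpos
      · set x := Real.sqrt (-lam i0) • u i0 with hxdef
        have hvv : vecMulVec x x = (-lam i0) • vecMulVec (u i0) (u i0) := by
          rw [hxdef, PR3_smul_vmv, Real.mul_self_sqrt (by linarith)]
        have hxx : x ⬝ᵥ x = -lam i0 := by
          rw [hxdef, smul_dotProduct, dotProduct_smul, hdot i0 i0, if_pos rfl,
            smul_eq_mul, smul_eq_mul, mul_one, Real.mul_self_sqrt (by linarith)]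
        refine PR3_no_indef A PR x 0 (by rw [hxx]; linarith) (dotProduct_zero x) ?_
        intro j
        have hqe : vecMulVec x x - vecMulVec (0 : Fin d → ℝ) 0 = -Q := by
          rw [hvv, hQ1]
          ext a b
          simp only [Matrix.sub_apply, Matrix.neg_apply, Matrix.smul_apply,
            vecMulVec_apply, Pi.zero_apply, smul_eq_mul]
          ring
        rw [hqe, mul_neg, trace_neg, htr j, neg_zero]
      · set x := Real.sqrt (lam i0) • u i0 with hxdef
        have hvv : vecMulVec x x = lam i0 • vecMulVec (u i0) (u i0) := by
          rw [hxdef, PR3_smul_vmv, Real.mul_self_sqrt (by linarith)]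
        have hxx : x ⬝ᵥ x = lam i0 := by
          rw [hxdef, smul_dotProduct, dotProduct_smul, hdot i0 i0, if_pos rfl,
            smul_eq_mul, smul_eq_mul, mul_one, Real.mul_self_sqrt (by linarith)]
        refine PR3_no_indef A PR x 0 (by rw [hxx]; linarith) (dotProduct_zero x) ?_
        intro j
        have hqe : vecMulVec x x - vecMulVec (0 : Fin d → ℝ) 0 = Q := by
          rw [hvv, hQ1]
          ext a b
          simp only [Matrix.sub_apply, Matrix.smul_apply, vecMulVec_apply,
            Pi.zero_apply, smul_eq_mul]
          ring
        rw [hqe, htr j]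
    · obtain ⟨⟨i1, h1⟩, ⟨i2, h2⟩, hne, hcover⟩ := (Nat.card_eq_two_iff (α := {i // lam i ≠ 0})).1 (by rw [Nat.card_eq_fintype_card]; exact hc2)
      have hne12 : i1 ≠ i2 := fun h => hne (Subtype.ext h)
      have hz : ∀ j, j ≠ i1 → j ≠ i2 → lam j = 0 := by
        intro j hj1 hj2
        by_contra hnz
        have hmem : (⟨j, hnz⟩ : {i // lam i ≠ 0}) ∈
            ({⟨i1, h1⟩, ⟨i2, h2⟩} : Set {i // lam i ≠ 0}) := by
          rw [hcover]; trivial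
        rcases hmem with hm | hm
        · exact hj1 (congrArg Subtype.val hm)
        · exact hj2 (congrArg Subtype.val hm)
      have hQ2 : Q = lam i1 • vecMulVec (u i1) (u i1) + lam i2 • vecMulVec (u i2) (u i2) := by
        rw [hsum,
          ← Finset.sum_subset (Finset.subset_univ ({i1, i2} : Finset (Fin d)))
            (fun j _ hj => by
              rw [hz j (fun h => hj (by simp [h])) (fun h => hj (by simp [h])), zero_smul]),
          Finset.sum_pair hne12]
      have hrank2 : Q.rank = 2 := hrke.trans hc2
      rcases lt_or_gt_of_ne h1 with hn1 | hp1 <;> rcases lt_or_gt_of_ne h2 with hn2 | hp2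
      · -- both negative
        refine ⟨hrank2, Or.inr ?_⟩
        have hQneg : -Q = vecMulVec (Real.sqrt (-lam i1) • u i1) (Real.sqrt (-lam i1) • u i1)
            + vecMulVec (Real.sqrt (-lam i2) • u i2) (Real.sqrt (-lam i2) • u i2) := by
          rw [PR3_smul_vmv, PR3_smul_vmv, Real.mul_self_sqrt (by linarith),
            Real.mul_self_sqrt (by linarith), hQ2]
          ext a b
          simp only [Matrix.add_apply, Matrix.neg_apply, Matrix.smul_apply,
            vecMulVec_apply, smul_eq_mul]
          ring
        rw [hQneg]
        exact (PR3_vmv_psd _).add (PR3_vmv_psd _)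
      · -- lam i1 < 0 < lam i2
        exfalso
        set x := Real.sqrt (lam i2) • u i2 with hxdef
        set y := Real.sqrt (-lam i1) • u i1 with hydef
        have hQeq : Q = vecMulVec x x - vecMulVec y y := by
          rw [hxdef, hydef, PR3_smul_vmv, PR3_smul_vmv, Real.mul_self_sqrt (by linarith),
            Real.mul_self_sqrt (by linarith), hQ2]
          ext a b
          simp only [Matrix.add_apply, Matrix.sub_apply, Matrix.smul_apply,
            vecMulVec_apply, smul_eq_mul]
          ring
        have hxx : x ⬝ᵥ x = lam i2 := by
          rw [hxdef, smul_dotProduct, dotProduct_smul, hdot i2 i2, if_pos rfl,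
            smul_eq_mul, smul_eq_mul, mul_one, Real.mul_self_sqrt (by linarith)]
        have hxy : x ⬝ᵥ y = 0 := by
          rw [hxdef, hydef, smul_dotProduct, dotProduct_smul, hdot i2 i1,
            if_neg hne12.symm]
          simp
        exact PR3_no_indef A PR x y (by rw [hxx]; linarith) hxy
          (fun j => hQeq ▸ htr j)
      · -- lam i2 < 0 < lam i1
        exfalso
        set x := Real.sqrt (lam i1) • u i1 with hxdef
        set y := Real.sqrt (-lam i2) • u i2 with hydef
        have hQeq : Q = vecMulVec x x - vecMulVec y y := by
          rw [hxdef, hydef, PR3_smul_vmv, PR3_smul_vmv, Real.mul_self_sqrt (by linarith),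
            Real.mul_self_sqrt (by linarith), hQ2]
          ext a b
          simp only [Matrix.add_apply, Matrix.sub_apply, Matrix.smul_apply,
            vecMulVec_apply, smul_eq_mul]
          ring
        have hxx : x ⬝ᵥ x = lam i1 := by
          rw [hxdef, smul_dotProduct, dotProduct_smul, hdot i1 i1, if_pos rfl,
            smul_eq_mul, smul_eq_mul, mul_one, Real.mul_self_sqrt (by linarith)]
        have hxy : x ⬝ᵥ y = 0 := by
          rw [hxdef, hydef, smul_dotProduct, dotProduct_smul, hdot i1 i2,
            if_neg hne12]
          simp
        exact PR3_no_indef A PR x y (by rw [hxx]; linarith) hxy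
          (fun j => hQeq ▸ htr j)
      · -- both positive
        refine ⟨hrank2, Or.inl ?_⟩
        have hQpos : Q = vecMulVec (Real.sqrt (lam i1) • u i1) (Real.sqrt (lam i1) • u i1)
            + vecMulVec (Real.sqrt (lam i2) • u i2) (Real.sqrt (lam i2) • u i2) := by
          rw [PR3_smul_vmv, PR3_smul_vmv, Real.mul_self_sqrt (by linarith),
            Real.mul_self_sqrt (by linarith), hQ2]
        rw [hQpos]
        exact (PR3_vmv_psd _).add (PR3_vmv_psd _)
  · intro hyp x y hm
    by_contra hcon
    push_neg at hcon
    obtain ⟨hxy, hxny⟩ := hcon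
    set Q := vecMulVec x x - vecMulVec y y with hQdef
    have hQ0 : Q ≠ 0 := by
      intro h0
      have : vecMulVec x x = vecMulVec y y := by
        have := sub_eq_zero.1 (hQdef ▸ h0)
        exact this
      rcases PR3_vmv_self_inj this with h | h
      · exact hxy h
      · exact hxny h
    have hQsym : Q.IsSymm := by
      rw [hQdef]
      unfold Matrix.IsSymm
      ext a b
      simp only [Matrix.transpose_apply, Matrix.sub_apply, vecMulVec_apply]
      ring
    have hQrk : Q.rank ≤ 2 := by
      have he : Q = vecMulVec x x + vecMulVec (-y) y := by
        rw [hQdef]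
        ext a b
        simp only [Matrix.add_apply, Matrix.sub_apply, vecMulVec_apply, Pi.neg_apply]
        ring
      rw [he]
      exact (PR3_rank_add_le _ _).trans
        (add_le_add (PR3_rank_vmv_le _ _) (PR3_rank_vmv_le _ _))
    have hQtr : ∀ j, Matrix.trace (A j * Q) = 0 := by
      intro j
      rw [hQdef, mul_sub, trace_sub, PR3_tr_mul_vmv, PR3_tr_mul_vmv, hm j, sub_self]
    obtain ⟨hrk2, hpsd⟩ := hyp Q hQ0 hQsym hQrk hQtr
    rcases hpsd with hp | hp
    · have := PR3_psd_rank x y (hQdef ▸ hp)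
      rw [← hQdef] at this
      omega
    · have hnq : -Q = vecMulVec y y - vecMulVec x x := by
        rw [hQdef]; exact neg_sub _ _
      have := PR3_psd_rank y x (hnq ▸ hp)
      rw [← hnq, PR3_rank_neg_eq] at this
      omega
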